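/- arXiv:0805.4280 — 3 statements merged into one kernel-verified Lean document; each statement's English description precedes it below -/
import Mathlib

section
/- Let Ω = ω₁ be the first uncountable ordinal with the order topology and let (f_n) be a sequence in C_b(ω₁) converging to 0 uniformly on every compact subset of ω₁. Then there exists α < ω₁ such that f_n → 0 uniformly on [α, ω₁). -/
open Filter Topology

/-- The first uncountable ordinal `ω₁`, i.e. the space of all countable ordinals. -/
def Omega1 : Type 1 := {o : Ordinal.{0} // o < (Cardinal.aleph 1).ord}

noncomputable instance : LinearOrder Omega1 :=
  inferInstanceAs (LinearOrder {o : Ordinal.{0} // o < (Cardinal.aleph 1).ord})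

noncomputable instance : TopologicalSpace Omega1 := Preorder.topology Omega1

instance : OrderTopology Omega1 := ⟨rfl⟩

lemma omega1_isLimit : Order.IsSuccLimit (Cardinal.aleph 1).ord :=
  Cardinal.isSuccLimit_ord (Cardinal.aleph0_le_aleph 1)

/-- Every countable family in `ω₁` has a least upper bound in `ω₁`. -/
lemma omega1_lub (b : ℕ → Omega1) : ∃ β : Omega1, IsLUB (Set.range b) β := by
  have hs : (⨆ k, (b k).1) < (Cardinal.aleph 1).ord := by
    apply Ordinal.iSup_lt_ord
    · rw [Cardinal.isRegular_aleph_one.cof_eq]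
      simpa using Cardinal.aleph0_lt_aleph_one
    · exact fun k => (b k).2
  refine ⟨⟨_, hs⟩, ?_, ?_⟩
  · rintro z ⟨k, rfl⟩
    exact Subtype.coe_le_coe.1 (le_ciSup (Ordinal.bddAbove_range _) k)
  · rintro c hc
    exact Subtype.coe_le_coe.1 (ciSup_le fun k => Subtype.coe_le_coe.2 (hc ⟨k, rfl⟩))

/-- Successor in `ω₁`. -/
noncomputable def osucc (a : Omega1) : Omega1 :=
  ⟨a.1 + 1, by rw [Ordinal.add_one_eq_succ]; exact omega1_isLimit.succ_lt a.2⟩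

lemma lt_osucc (a : Omega1) : a < osucc a := by
  have : a.1 < a.1 + 1 := by
    rw [Ordinal.add_one_eq_succ]; exact Order.lt_succ _
  exact Subtype.coe_lt_coe.1 this

/-- A continuous real function on `ω₁` has oscillation `≤ δ` on some tail. -/
lemma tail_osc (g : Omega1 → ℝ) (hg : Continuous g) {δ : ℝ} (hδ : 0 < δ) :
    ∃ α : Omega1, ∀ x y : Omega1, α ≤ x → α ≤ y → |g x - g y| ≤ δ := by
  by_contra hcon
  push_neg at hcon
  choose X Y hX hY hXY using hcon
  have hpos : (0 : Ordinal) < (Cardinal.aleph 1).ord := omega1_isLimit.pos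
  let b : ℕ → Omega1 := fun k =>
    Nat.rec (⟨0, hpos⟩ : Omega1) (fun _ p => osucc (max (X p) (Y p))) k
  have hb : ∀ k, b (k + 1) = osucc (max (X (b k)) (Y (b k))) := fun _ => rfl
  have hmono : StrictMono b := by
    apply strictMono_nat_of_lt_succ
    intro k
    calc b k ≤ X (b k) := hX _
      _ ≤ max (X (b k)) (Y (b k)) := le_max_left _ _
      _ < b (k + 1) := by rw [hb]; exact lt_osucc _
  obtain ⟨β, hβ⟩ := omega1_lub b
  have hub : ∀ k, b k ≤ β := fun k => hβ.1 ⟨k, rfl⟩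
  have hbt : Tendsto b atTop (𝓝 β) := tendsto_atTop_isLUB hmono.monotone hβ
  have hxβ : ∀ k, X (b k) ≤ β := fun k => by
    calc X (b k) ≤ max (X (b k)) (Y (b k)) := le_max_left _ _
      _ ≤ b (k + 1) := by rw [hb]; exact (lt_osucc _).le
      _ ≤ β := hub (k + 1)
  have hyβ : ∀ k, Y (b k) ≤ β := fun k => by
    calc Y (b k) ≤ max (X (b k)) (Y (b k)) := le_max_right _ _
      _ ≤ b (k + 1) := by rw [hb]; exact (lt_osucc _).le
      _ ≤ β := hub (k + 1)
  have hxt : Tendsto (fun k => X (b k)) atTop (𝓝 β) :=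
    tendsto_of_tendsto_of_tendsto_of_le_of_le hbt tendsto_const_nhds
      (fun k => hX (b k)) hxβ
  have hyt : Tendsto (fun k => Y (b k)) atTop (𝓝 β) :=
    tendsto_of_tendsto_of_tendsto_of_le_of_le hbt tendsto_const_nhds
      (fun k => hY (b k)) hyβ
  have h1 : Tendsto (fun k => g (X (b k)) - g (Y (b k))) atTop (𝓝 (g β - g β)) :=
    ((hg.tendsto β).comp hxt).sub ((hg.tendsto β).comp hyt)
  rw [sub_self] at h1
  have h2 : Tendsto (fun k => |g (X (b k)) - g (Y (b k))|) atTop (𝓝 0) := by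
    simpa using h1.abs
  obtain ⟨k, hk⟩ := (h2.eventually (gt_mem_nhds hδ)).exists
  exact absurd (hXY (b k)) (not_lt.2 hk.le)

/-- If a sequence `(f_n) ⊆ C_b(ω₁)` converges to `0` uniformly on every
compact subset of `ω₁`, then it converges to `0` uniformly on some tail `[α, ω₁)`. -/
theorem stmt13 (f : ℕ → BoundedContinuousFunction Omega1 ℝ)
    (hcpt : ∀ K : Set Omega1, IsCompact K → ∀ ε > (0 : ℝ),
      ∃ N : ℕ, ∀ n ≥ N, ∀ x ∈ K, |f n x| ≤ ε) :
    ∃ α : Omega1, ∀ ε > (0 : ℝ), ∃ N : ℕ, ∀ n ≥ N, ∀ x : Omega1, α ≤ x → |f n x| ≤ ε := by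
  have h := fun n : ℕ =>
    tail_osc (f n) (f n).continuous (δ := 1 / ((n : ℝ) + 1)) (by positivity)
  choose a ha using h
  obtain ⟨β, hβ⟩ := omega1_lub a
  have hub : ∀ n, a n ≤ β := fun n => hβ.1 ⟨n, rfl⟩
  refine ⟨β, fun ε hε => ?_⟩
  obtain ⟨N₁, hN₁⟩ := hcpt {β} isCompact_singleton (ε / 2) (by positivity)
  obtain ⟨N₂, hN₂⟩ := exists_nat_one_div_lt (show (0 : ℝ) < ε / 2 by positivity)
  refine ⟨max N₁ N₂, fun n hn x hx => ?_⟩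
  have h1 : |f n x - f n β| ≤ 1 / ((n : ℝ) + 1) :=
    ha n x β (le_trans (hub n) hx) (hub n)
  have h2 : |f n β| ≤ ε / 2 := hN₁ n (le_trans (le_max_left _ _) hn) β rfl
  have h3 : (1 : ℝ) / ((n : ℝ) + 1) ≤ 1 / ((N₂ : ℝ) + 1) := by
    apply one_div_le_one_div_of_le (by positivity)
    have : (N₂ : ℝ) ≤ (n : ℝ) := by
      exact_mod_cast le_trans (le_max_right N₁ N₂) hn
    linarith
  calc |f n x| = |(f n x - f n β) + f n β| := by ring_nf
    _ ≤ |f n x - f n β| + |f n β| := abs_add_le _ _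
    _ ≤ 1 / ((n : ℝ) + 1) + ε / 2 := add_le_add h1 h2
    _ ≤ 1 / ((N₂ : ℝ) + 1) + ε / 2 := by linarith
    _ ≤ ε := by linarith [hN₂]
end

section
/- On ω₁ with the order topology, the functional Λ : C_b(ω₁) → ℝ assigning to f its eventual constant value (Λ(f) = c where f ≡ c on some tail [α, ω₁)) is a well-defined bounded linear functional with ‖Λ‖ = 1, and Λ is sequentially continuous with respect to uniform convergence on compact sets restricted to sup-norm bounded sequences: if sup_n ‖f_n‖_∞ < ∞ and f_n → 0 uniformly on compacts, then Λ(f_n) → 0. -/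
open Filter Topology

namespace Stmt15Aux

instance : Nonempty Omega1 := ⟨⟨0, Cardinal.isRegular_aleph_one.ord_pos⟩⟩

/-- every countable family in `Omega1` is bounded above -/
lemma countable_bdd (g : ℕ → Omega1) : ∃ b : Omega1, ∀ n, g n ≤ b := by
  have hlt : (⨆ n, (g n).1) < (Cardinal.aleph 1).ord := by
    apply Cardinal.iSup_lt_ord_lift_of_isRegular Cardinal.isRegular_aleph_one
    · simpa using Cardinal.aleph0_lt_aleph_one
    · exact fun n => (g n).2
  refine ⟨⟨_, hlt⟩, fun n => ?_⟩
  exact le_ciSup (Ordinal.bddAbove_range _) n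

/-- strictly monotone sequences converge to the sup of their values -/
lemma tendsto_of_strictMono (x : ℕ → Omega1) (δ : Omega1)
    (hδ : δ.1 = ⨆ n, (x n).1) (hm : Monotone x) :
    Filter.Tendsto x Filter.atTop (nhds δ) := by
  rw [tendsto_order]
  constructor
  · intro a ha
    have : a.1 < ⨆ n, (x n).1 := hδ ▸ ha
    rw [lt_ciSup_iff (Ordinal.bddAbove_range _)] at this
    obtain ⟨N, hN⟩ := this
    filter_upwards [eventually_ge_atTop N] with n hn
    exact lt_of_lt_of_le hN (hm hn)
  · intro b hb
    filter_upwards with n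
    refine lt_of_le_of_lt ?_ hb
    show (x n).1 ≤ δ.1
    rw [hδ]
    exact le_ciSup (Ordinal.bddAbove_range _) n

lemma stepA (f : Omega1 → ℝ) (hf : Continuous f) {ε : ℝ} (hε : 0 < ε) :
    ∃ α : Omega1, ∀ β, α ≤ β → |f β - f α| ≤ ε := by
  by_contra h
  push_neg at h
  -- h : ∀ α, ∃ β, α ≤ β ∧ ε < |f β - f α|
  choose F hF1 hF2 using h
  have hFlt : ∀ α, α < F α := fun α =>
    lt_of_le_of_ne (hF1 α) (by
      intro he
      have := hF2 α
      rw [← he] at this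
      simp at this
      exact absurd this (not_lt.mpr hε.le))
  set x : ℕ → Omega1 := fun n => F^[n] (Classical.arbitrary Omega1) with hx
  have hsm : StrictMono x := strictMono_nat_of_lt_succ (by
    intro n
    have : x (n + 1) = F (x n) := Function.iterate_succ_apply' _ _ _
    rw [this]; exact hFlt _)
  obtain ⟨b, hb⟩ := countable_bdd x
  have hlt : (⨆ n, (x n).1) < (Cardinal.aleph 1).ord :=
    lt_of_le_of_lt (ciSup_le fun n => hb n) b.2
  set δ : Omega1 := ⟨_, hlt⟩
  have htd : Filter.Tendsto x Filter.atTop (nhds δ) :=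
    tendsto_of_strictMono x δ rfl hsm.monotone
  have hfc : Filter.Tendsto (fun n => f (x n)) Filter.atTop (nhds (f δ)) :=
    (hf.tendsto δ).comp htd
  have hev : ∀ᶠ n in atTop, |f (x n) - f δ| < ε / 2 := by
    have := Metric.tendsto_atTop.mp hfc (ε / 2) (by linarith)
    obtain ⟨N, hN⟩ := this
    filter_upwards [eventually_ge_atTop N] with n hn
    simpa [Real.dist_eq] using hN n hn
  obtain ⟨N, hN⟩ := hev.exists_forall_of_atTop
  have h1 : |f (x (N + 1)) - f δ| < ε / 2 := hN (N + 1) (by omega)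
  have h2 : |f (x N) - f δ| < ε / 2 := hN N le_rfl
  have h3 : ε < |f (x (N + 1)) - f (x N)| := by
    have : x (N + 1) = F (x N) := Function.iterate_succ_apply' _ _ _
    rw [this]; exact hF2 (x N)
  have : |f (x (N + 1)) - f (x N)| ≤ |f (x (N + 1)) - f δ| + |f (x N) - f δ| := by
    have := abs_sub_abs_le_abs_sub (f (x (N+1)) - f δ) (f (x N) - f δ)
    calc |f (x (N + 1)) - f (x N)| = |(f (x (N+1)) - f δ) - (f (x N) - f δ)| := by ring_nf
    _ ≤ _ := abs_sub _ _
  linarith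

/-- every bounded continuous real function on `Omega1` is eventually constant -/
theorem eventuallyConst (f : BoundedContinuousFunction Omega1 ℝ) :
    ∃ α : Omega1, ∀ β, α ≤ β → f β = f α := by
  have h : ∀ n : ℕ, ∃ α : Omega1, ∀ β, α ≤ β → |f β - f α| ≤ 1 / (n + 1) :=
    fun n => stepA f f.continuous (by positivity)
  choose a ha using h
  obtain ⟨b, hb⟩ := countable_bdd a
  refine ⟨b, fun β hβ => ?_⟩
  have key : ∀ n : ℕ, |f β - f b| ≤ 2 / (n + 1) := by
    intro n
    have h1 : |f β - f (a n)| ≤ 1 / (n + 1) := ha n β (le_trans (hb n) hβ)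
    have h2 : |f b - f (a n)| ≤ 1 / (n + 1) := ha n b (hb n)
    have : |f β - f b| ≤ |f β - f (a n)| + |f b - f (a n)| := by
      calc |f β - f b| = |(f β - f (a n)) - (f b - f (a n))| := by ring_nf
      _ ≤ _ := abs_sub _ _
    have hn : (0:ℝ) < n + 1 := by positivity
    have heq : (2:ℝ) / (n + 1) = 1 / (n + 1) + 1 / (n + 1) := by ring
    rw [heq]; linarith
  have : |f β - f b| ≤ 0 := by
    by_contra hc
    push_neg at hc
    obtain ⟨n, hn⟩ := exists_nat_gt (2 / |f β - f b|)
    have hpos : (0:ℝ) < n + 1 := by positivity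
    have hkn := key n
    rw [le_div_iff₀ hpos] at hkn
    rw [div_lt_iff₀ hc] at hn
    nlinarith
  have := abs_nonneg (f β - f b)
  have : |f β - f b| = 0 := le_antisymm ‹_› ‹_›
  linarith [abs_eq_zero.mp this, sub_eq_zero.mp (abs_eq_zero.mp this)]

noncomputable def evVal (f : BoundedContinuousFunction Omega1 ℝ) : ℝ :=
  f (Classical.choose (eventuallyConst f))

lemma evVal_spec (f : BoundedContinuousFunction Omega1 ℝ) (c : ℝ)
    (h : ∃ α : Omega1, ∀ β, α ≤ β → f β = c) : evVal f = c := by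
  obtain ⟨α, hα⟩ := h
  have h0 := Classical.choose_spec (eventuallyConst f)
  set α₀ := Classical.choose (eventuallyConst f)
  have := h0 (max α₀ α) (le_max_left _ _)
  rw [evVal, ← this]
  exact hα _ (le_max_right _ _)

lemma evVal_tail (f : BoundedContinuousFunction Omega1 ℝ) :
    ∀ β, Classical.choose (eventuallyConst f) ≤ β → f β = evVal f :=
  Classical.choose_spec (eventuallyConst f)

lemma evVal_add (f g : BoundedContinuousFunction Omega1 ℝ) :
    evVal (f + g) = evVal f + evVal g := by
  apply evVal_spec
  refine ⟨max (Classical.choose (eventuallyConst f)) (Classical.choose (eventuallyConst g)),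
    fun β hβ => ?_⟩
  have h1 := evVal_tail f β (le_trans (le_max_left _ _) hβ)
  have h2 := evVal_tail g β (le_trans (le_max_right _ _) hβ)
  simp [h1, h2]

lemma evVal_smul (r : ℝ) (f : BoundedContinuousFunction Omega1 ℝ) :
    evVal (r • f) = r • evVal f := by
  apply evVal_spec
  refine ⟨Classical.choose (eventuallyConst f), fun β hβ => ?_⟩
  have h1 := evVal_tail f β hβ
  simp [h1]

noncomputable def Λ : BoundedContinuousFunction Omega1 ℝ →L[ℝ] ℝ :=
  LinearMap.mkContinuous
    { toFun := evVal
      map_add' := evVal_add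
      map_smul' := evVal_smul } 1
    (fun f => by
      simp only [LinearMap.coe_mk, AddHom.coe_mk, one_mul]
      calc ‖evVal f‖ = ‖f (Classical.choose (eventuallyConst f))‖ := rfl
      _ ≤ ‖f‖ := f.norm_coe_le_norm _)

end Stmt15Aux

/-- The functional `Λ` on `C_b(ω₁)` assigning to `f` its eventual constant
value is a well-defined bounded linear functional of norm one, and it is sequentially
continuous for uniform convergence on compacts along sup-norm-bounded sequences. -/
theorem stmt15 :
    ∃ Λ : BoundedContinuousFunction Omega1 ℝ →L[ℝ] ℝ,
      (∀ (f : BoundedContinuousFunction Omega1 ℝ) (c : ℝ),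
        (∃ α : Omega1, ∀ β : Omega1, α ≤ β → f β = c) → Λ f = c) ∧
      ‖Λ‖ = 1 ∧
      (∀ (f : ℕ → BoundedContinuousFunction Omega1 ℝ) (M : ℝ),
        (∀ n, ‖f n‖ ≤ M) →
        (∀ K : Set Omega1, IsCompact K → ∀ ε > (0 : ℝ),
          ∃ N : ℕ, ∀ n ≥ N, ∀ x ∈ K, |f n x| ≤ ε) →
        Filter.Tendsto (fun n => Λ (f n)) Filter.atTop (nhds 0)) := by
  refine ⟨Stmt15Aux.Λ, fun f c h => Stmt15Aux.evVal_spec f c h, ?_, ?_⟩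
  · refine le_antisymm (LinearMap.mkContinuous_norm_le _ zero_le_one _) ?_
    have h1 : Stmt15Aux.Λ (1 : BoundedContinuousFunction Omega1 ℝ) = 1 := by
      show Stmt15Aux.evVal 1 = 1
      exact Stmt15Aux.evVal_spec 1 1 ⟨Classical.arbitrary Omega1, fun β _ => rfl⟩
    have := Stmt15Aux.Λ.le_opNorm (1 : BoundedContinuousFunction Omega1 ℝ)
    rw [h1] at this
    simpa using this
  · intro f M _ hK
    rw [Metric.tendsto_atTop]
    intro ε hε
    -- the eventual value is attained at a common point α*
    set α : ℕ → Omega1 := fun n => Classical.choose (Stmt15Aux.eventuallyConst (f n))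
    obtain ⟨b, hb⟩ := Stmt15Aux.countable_bdd α
    have hval : ∀ n, Stmt15Aux.Λ (f n) = f n b := fun n =>
      (Stmt15Aux.evVal_tail (f n) b (hb n)).symm
    obtain ⟨N, hN⟩ := hK {b} isCompact_singleton (ε / 2) (by linarith)
    refine ⟨N, fun n hn => ?_⟩
    rw [Real.dist_eq, sub_zero, hval n]
    have := hN n hn b rfl
    linarith [this]
end

section
/- Let X be a Banach space with an additional locally convex topology τ given by a family of seminorms 𝒮 with p ≤ ‖·‖ for all p ∈ 𝒮, and let τ_m be the mixed topology generated by the seminorms x ↦ sup_n a_n p_n(x) for sequences (p_n) ⊆ 𝒮 and positive null sequences (a_n). Then a sequence (x_k) converges to 0 in τ_m if and only if (x_k) is norm-bounded and x_k → 0 in τ. -/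
open Filter Topology

/-- With `τ_m` the mixed topology generated by the seminorms
`x ↦ sup_n a_n p_n(x)` (for `(p_n) ⊆ 𝒮` and positive null sequences `(a_n)`), a sequence
converges to `0` in `τ_m` iff it is norm-bounded and converges to `0` in `τ` (i.e. for
every seminorm in `𝒮`). -/
theorem stmt16 (X : Type*) [NormedAddCommGroup X] [NormedSpace ℝ X] [CompleteSpace X]
    (S : Set (Seminorm ℝ X))
    (hle : ∀ p ∈ S, ∀ x : X, p x ≤ ‖x‖)
    (hnorm : ∀ x : X, ‖x‖ = ⨆ p : S, (p : Seminorm ℝ X) x)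
    (x : ℕ → X) :
    (∀ (pn : ℕ → S) (a : ℕ → ℝ), (∀ n, 0 ≤ a n) →
        Filter.Tendsto a Filter.atTop (nhds 0) →
        Filter.Tendsto (fun k => ⨆ n, a n * (pn n : Seminorm ℝ X) (x k))
          Filter.atTop (nhds 0)) ↔
      ((∃ C : ℝ, ∀ k, ‖x k‖ ≤ C) ∧
        ∀ p ∈ S, Filter.Tendsto (fun k => p (x k)) Filter.atTop (nhds 0)) := by
  constructor
  · intro H
    constructor
    · -- boundedness
      by_contra hC
      push_neg at hC
      choose k hk using fun n : ℕ => hC ((n + 1 : ℝ) ^ 2)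
      have hpos : ∀ n, (0 : ℝ) < ‖x (k n)‖ := fun n => lt_of_le_of_lt (by positivity) (hk n)
      have hSne : Nonempty S := by
        by_contra hne
        haveI := not_nonempty_iff.mp hne
        have h0 := hnorm (x (k 0))
        rw [Real.iSup_of_isEmpty] at h0
        exact absurd h0 (ne_of_gt (hpos 0))
      have hchoose : ∀ n, ∃ p : S, ‖x (k n)‖ - 1 < (p : Seminorm ℝ X) (x (k n)) := by
        intro n
        apply exists_lt_of_lt_ciSup
        rw [← hnorm]
        linarith
      choose pn hpn using hchoose
      have ha0 : ∀ n : ℕ, (0 : ℝ) ≤ ((n : ℝ) + 1)⁻¹ := fun n => by positivity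
      have hatend : Tendsto (fun n : ℕ => ((n : ℝ) + 1)⁻¹) atTop (nhds 0) := by
        simpa [one_div] using tendsto_one_div_add_atTop_nhds_zero_nat (𝕜 := ℝ)
      have hmain := H pn (fun n => ((n : ℝ) + 1)⁻¹) ha0 hatend
      have hkat : Tendsto k atTop atTop := by
        rw [tendsto_atTop_atTop]
        intro M
        obtain ⟨N, hN⟩ := ((tendsto_natCast_atTop_atTop (R := ℝ)).eventually_ge_atTop
          (∑ i ∈ Finset.range M, ‖x i‖)).exists_forall_of_atTop
        refine ⟨N, fun n hn => ?_⟩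
        by_contra hkM
        push_neg at hkM
        have h1 : ‖x (k n)‖ ≤ ∑ i ∈ Finset.range M, ‖x i‖ :=
          Finset.single_le_sum (f := fun i => ‖x i‖) (fun i _ => norm_nonneg _)
            (Finset.mem_range.mpr hkM)
        have h2 : (∑ i ∈ Finset.range M, ‖x i‖) ≤ (n : ℝ) := hN n hn
        have h3 : (n : ℝ) < ((n : ℝ) + 1) ^ 2 := by nlinarith [Nat.cast_nonneg (α := ℝ) n]
        have := hk n
        linarith
      have hcomp : Tendsto
          (fun n => ⨆ m : ℕ, ((m : ℝ) + 1)⁻¹ * (pn m : Seminorm ℝ X) (x (k n))) atTop (nhds 0) :=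
        hmain.comp hkat
      have hbig : ∀ n : ℕ, (n : ℝ) ≤ ⨆ m : ℕ, ((m : ℝ) + 1)⁻¹ * (pn m : Seminorm ℝ X) (x (k n)) := by
        intro n
        have hbdd : BddAbove (Set.range fun m : ℕ => ((m : ℝ) + 1)⁻¹ * (pn m : Seminorm ℝ X) (x (k n))) := by
          refine ⟨‖x (k n)‖, ?_⟩
          rintro _ ⟨m, rfl⟩
          calc ((m : ℝ) + 1)⁻¹ * (pn m : Seminorm ℝ X) (x (k n)) ≤ 1 * ‖x (k n)‖ := by
                apply mul_le_mul _ (hle _ (pn m).2 _) (apply_nonneg _ _) zero_le_one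
                rw [inv_le_one_iff₀]
                right; linarith [Nat.cast_nonneg (α := ℝ) m]
            _ = ‖x (k n)‖ := one_mul _
        refine le_trans ?_ (le_ciSup hbdd n)
        have h1 : ((n : ℝ) + 1) ^ 2 - 1 < (pn n : Seminorm ℝ X) (x (k n)) := by
          have := hpn n; have := hk n; linarith
        have hn1 : (0 : ℝ) < (n : ℝ) + 1 := by positivity
        have h2 : (n : ℝ) ≤ ((n : ℝ) + 1)⁻¹ * (((n : ℝ) + 1) ^ 2 - 1) := by
          rw [inv_mul_eq_div, le_div_iff₀ hn1]
          nlinarith [Nat.cast_nonneg (α := ℝ) n]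
        exact le_trans h2 (mul_le_mul_of_nonneg_left h1.le (ha0 n))
      obtain ⟨N, hN⟩ := Metric.tendsto_atTop.mp hcomp 1 one_pos
      have hd := hN (max N 1) (le_max_left _ _)
      have h2 := hbig (max N 1)
      rw [Real.dist_eq, sub_zero] at hd
      have h3 : (1 : ℝ) ≤ ((max N 1 : ℕ) : ℝ) := by exact_mod_cast le_max_right N 1
      have h4 := le_trans h3 h2
      have := abs_lt.mp hd
      linarith
    · -- convergence for each p
      intro p hp
      have ha0 : ∀ n : ℕ, (0 : ℝ) ≤ if n = 0 then 1 else 0 := by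
        intro n; split <;> norm_num
      have hatend : Tendsto (fun n : ℕ => if n = 0 then (1 : ℝ) else 0) atTop (nhds 0) := by
        apply Tendsto.congr' _ tendsto_const_nhds
        filter_upwards [eventually_ge_atTop 1] with n hn
        simp [Nat.one_le_iff_ne_zero.mp hn]
      have hmain := H (fun _ => ⟨p, hp⟩) (fun n => if n = 0 then 1 else 0) ha0 hatend
      have key : ∀ kk : ℕ, (⨆ n : ℕ, (if n = 0 then (1 : ℝ) else 0) * p (x kk)) = p (x kk) := by
        intro kk
        apply le_antisymm
        · apply ciSup_le
          intro n; split
          · rw [one_mul]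
          · rw [zero_mul]; exact apply_nonneg _ _
        · refine le_trans (le_of_eq ?_) (le_ciSup ⟨p (x kk), ?_⟩ 0)
          · norm_num
          · rintro _ ⟨m, rfl⟩
            dsimp only
            split
            · rw [one_mul]
            · rw [zero_mul]; exact apply_nonneg _ _
      simpa only [key] using hmain
  · rintro ⟨⟨C, hC⟩, hconv⟩ pn a ha0 hatend
    set C' := max C 0 with hC'
    have hC'0 : 0 ≤ C' := le_max_right _ _
    have hxk : ∀ k, ‖x k‖ ≤ C' := fun k => le_trans (hC k) (le_max_left _ _)
    obtain ⟨A, hA⟩ := hatend.bddAbove_range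
    have hA' : ∀ n, a n ≤ A := fun n => hA (Set.mem_range_self n)
    have hA0 : 0 ≤ A := le_trans (ha0 0) (hA' 0)
    rw [Metric.tendsto_atTop]
    intro ε hε
    obtain ⟨N, hN⟩ := Metric.tendsto_atTop.mp hatend (ε / (2 * (C' + 1))) (by positivity)
    have hKn : ∀ n : ℕ, ∃ K, ∀ k ≥ K, ((pn n : Seminorm ℝ X)) (x k) < ε / (2 * (A + 1)) := by
      intro n
      obtain ⟨K, hK⟩ := Metric.tendsto_atTop.mp (hconv _ (pn n).2) (ε / (2 * (A + 1))) (by positivity)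
      refine ⟨K, fun k hk => ?_⟩
      have := hK k hk
      rwa [Real.dist_eq, sub_zero, abs_of_nonneg (apply_nonneg _ _)] at this
    choose Kf hKf using hKn
    refine ⟨(Finset.range N).sup Kf, fun k hk => ?_⟩
    rw [Real.dist_eq, sub_zero,
      abs_of_nonneg (Real.iSup_nonneg fun n => mul_nonneg (ha0 n) (apply_nonneg _ _))]
    have hsup : (⨆ n, a n * (pn n : Seminorm ℝ X) (x k)) ≤ ε / 2 := by
      apply Real.iSup_le _ (by positivity)
      intro n
      rcases lt_or_ge n N with hn | hn
      · have hps : (pn n : Seminorm ℝ X) (x k) < ε / (2 * (A + 1)) :=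
          hKf n k (le_trans (Finset.le_sup (Finset.mem_range.mpr hn)) hk)
        calc a n * (pn n : Seminorm ℝ X) (x k) ≤ A * (ε / (2 * (A + 1))) :=
              mul_le_mul (hA' n) hps.le (apply_nonneg _ _) hA0
          _ ≤ ε / 2 := by
              rw [mul_comm, div_mul_eq_mul_div, div_le_div_iff₀ (by positivity) two_pos]
              nlinarith
      · have has : a n < ε / (2 * (C' + 1)) := by
          have := hN n hn
          rwa [Real.dist_eq, sub_zero, abs_of_nonneg (ha0 n)] at this
        calc a n * (pn n : Seminorm ℝ X) (x k) ≤ (ε / (2 * (C' + 1))) * C' := by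
              apply mul_le_mul has.le (le_trans (hle _ (pn n).2 _) (hxk k)) (apply_nonneg _ _)
              positivity
          _ ≤ ε / 2 := by
              rw [div_mul_eq_mul_div, div_le_div_iff₀ (by positivity) two_pos]
              nlinarith
    linarith
end
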